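/- Let Σ be an embedded J-holomorphic curve in S⁶ with local oriented orthonormal frame {f₁, f₂ = jf₁}. Then the Dirac operator 𝐃_Σ = Σᵢ fᵢ × ∇̃^⊥_{fᵢ} satisfies 𝐃_Σ = Σᵢ fᵢ × ∇^⊥_{fᵢ} − J, and the J-antilinear bundle map γ_Σ yields γ_Σ ∘ ∂̄^N_∇ = 𝐃_Σ + 2J. In particular γ_Σ((∇^⊥J)J) = −2J. -/

import Mathlib

open scoped RealInnerProductSpace

noncomputable section

/-- ℝ⁷ with its Euclidean inner product. -/
abbrev E7 : Type := EuclideanSpace ℝ (Fin 7)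

/-- (e^i ∧ e^j ∧ e^k)(x, y, z). -/
def tripleDet (i j k : Fin 7) (x y z : E7) : ℝ :=
  Matrix.det !![x i, y i, z i; x j, y j, z j; x k, y k, z k]

/-- The standard G₂ 3-form
φₑ = e^{123} − e^{145} − e^{167} − e^{246} − e^{275} − e^{347} − e^{356}
(indices shifted to start from 0). -/
def phiE (x y z : E7) : ℝ :=
  tripleDet 0 1 2 x y z - tripleDet 0 3 4 x y z - tripleDet 0 5 6 x y z -
    tripleDet 1 3 5 x y z - tripleDet 1 6 4 x y z - tripleDet 2 3 6 x y z -
    tripleDet 2 4 5 x y z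

/-- The octonionic cross product on ℝ⁷ = Im 𝕆, characterized by ⟨u × v, w⟩ = φₑ(u,v,w). -/
def cross7 (u v : E7) : E7 :=
  (EuclideanSpace.equiv (Fin 7) ℝ).symm fun k => phiE u v (EuclideanSpace.single k 1)

/-- Tangential projection onto T_x S⁶ (for ‖x‖ = 1): w ↦ w − ⟨x,w⟩x. -/
def tproj (x w : E7) : E7 := w - ⟪x, w⟫ • x

/-- Chart domain for a local parametrization of a surface Σ ⊂ S⁶. -/
abbrev Pt : Type := ℝ × ℝ

/-- The standard complex structure j₀ of the chart ℝ². -/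
def j0 (c : Pt) : Pt := (-c.2, c.1)

/-- The span of the position vector and the tangent plane of the parametrized surface
F : ℝ² → Σ ⊂ S⁶ at F(p). -/
def TanSpan (F : Pt → E7) (p : Pt) : Submodule ℝ E7 :=
  Submodule.span ℝ {F p, fderiv ℝ F p (1, 0), fderiv ℝ F p (0, 1)}

/-- The normal space N_{F(p)}Σ of Σ in S⁶. -/
def Nsp (F : Pt → E7) (p : Pt) : Submodule ℝ E7 := (TanSpan F p)ᗮ

/-- Orthogonal projection onto the normal space of Σ in S⁶. -/
def PN (F : Pt → E7) (p : Pt) (w : E7) : E7 := (Submodule.orthogonalProjection (Nsp F p) w : E7)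

/-- The normal connection ∇^⊥ (induced by the Levi–Civita connection of the round S⁶) on normal
vector fields ξ along Σ, in the chart direction c. -/
def covN (F ξ : Pt → E7) (p : Pt) (c : Pt) : E7 := PN F p (fderiv ℝ ξ p c)

/-- The normal part ∇̃^⊥ of the characteristic SU(3) connection
∇̃_u ξ = ∇_u ξ + ½ (∇_u J)(Jξ), in the chart direction c;
here (∇_u J)v = u ×_{S⁶} v on S⁶. -/
def covT (F ξ : Pt → E7) (p : Pt) (c : Pt) : E7 :=
  PN F p (fderiv ℝ ξ p c + (2 : ℝ)⁻¹ • cross7 (fderiv ℝ F p c) (cross7 (F p) (ξ p)))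

/-- The normal Cauchy–Riemann operator
∂̄^N_∇ ξ = ½(∇^⊥ξ + J∘(∇^⊥ξ)∘j + ∇^⊥_ξ J ∘ j), as a 1-form in the chart direction c. -/
def dbarN (F ξ : Pt → E7) (p : Pt) (c : Pt) : E7 :=
  (2 : ℝ)⁻¹ • (covN F ξ p c + cross7 (F p) (covN F ξ p (j0 c)) +
    PN F p (tproj (F p) (cross7 (ξ p) (fderiv ℝ F p (j0 c)))))

/-- The 1-form ((∇^⊥J)(Jξ))(c) = ∇^⊥_c(Jξ) − J ∇^⊥_c ξ. -/
def nablaPerpJJ (F ξ : Pt → E7) (p : Pt) (c : Pt) : E7 :=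
  covN F (fun q => cross7 (F q) (cross7 (F q) (ξ q))) p c -
    cross7 (F p) (covN F (fun q => cross7 (F q) (ξ q)) p c)

/-- The Dirac operator 𝐃_Σ = Σᵢ fᵢ × ∇̃^⊥_{fᵢ}, in a chart which is orthonormal at the point p
(f₁ = dF(e₁), f₂ = dF(e₂) = j f₁). -/
def DSig (F ξ : Pt → E7) (p : Pt) : E7 :=
  cross7 (fderiv ℝ F p (1, 0)) (covT F ξ p (1, 0)) +
    cross7 (fderiv ℝ F p (0, 1)) (covT F ξ p (0, 1))

/- ### Auxiliary lemmas -/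

lemma cross7_apply (u v : E7) (k : Fin 7) :
    cross7 u v k = phiE u v (EuclideanSpace.single k 1) := rfl

lemma inner_E7 (x y : E7) : ⟪x, y⟫ = ∑ i, x i * y i := by
  simp [PiLp.inner_apply, RCLike.inner_apply, conj_trivial]
  exact Finset.sum_congr rfl fun i _ => mul_comm _ _

lemma e7_ext {x y : E7} (h0 : x 0 = y 0) (h1 : x 1 = y 1) (h2 : x 2 = y 2) (h3 : x 3 = y 3)
    (h4 : x 4 = y 4) (h5 : x 5 = y 5) (h6 : x 6 = y 6) : x = y := by
  ext k
  fin_cases k <;> assumption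
lemma cross7_0 (u v : E7) : cross7 u v 0 = (u 1 * v 2 - u 2 * v 1) - (u 3 * v 4 - u 4 * v 3) - (u 5 * v 6 - u 6 * v 5) := by
  simp [cross7_apply, phiE, tripleDet, Matrix.det_fin_three, EuclideanSpace.single_apply,
    Matrix.vecHead, Matrix.vecTail]; ring

lemma cross7_1 (u v : E7) : cross7 u v 1 = - (u 0 * v 2 - u 2 * v 0) - (u 3 * v 5 - u 5 * v 3) - (u 6 * v 4 - u 4 * v 6) := by
  simp [cross7_apply, phiE, tripleDet, Matrix.det_fin_three, EuclideanSpace.single_apply,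
    Matrix.vecHead, Matrix.vecTail]; ring

lemma cross7_2 (u v : E7) : cross7 u v 2 = (u 0 * v 1 - u 1 * v 0) - (u 3 * v 6 - u 6 * v 3) - (u 4 * v 5 - u 5 * v 4) := by
  simp [cross7_apply, phiE, tripleDet, Matrix.det_fin_three, EuclideanSpace.single_apply,
    Matrix.vecHead, Matrix.vecTail]; ring

lemma cross7_3 (u v : E7) : cross7 u v 3 = (u 0 * v 4 - u 4 * v 0) + (u 1 * v 5 - u 5 * v 1) + (u 2 * v 6 - u 6 * v 2) := by
  simp [cross7_apply, phiE, tripleDet, Matrix.det_fin_three, EuclideanSpace.single_apply,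
    Matrix.vecHead, Matrix.vecTail]; ring

lemma cross7_4 (u v : E7) : cross7 u v 4 = - (u 0 * v 3 - u 3 * v 0) - (u 1 * v 6 - u 6 * v 1) + (u 2 * v 5 - u 5 * v 2) := by
  simp [cross7_apply, phiE, tripleDet, Matrix.det_fin_three, EuclideanSpace.single_apply,
    Matrix.vecHead, Matrix.vecTail]; ring

lemma cross7_5 (u v : E7) : cross7 u v 5 = (u 0 * v 6 - u 6 * v 0) - (u 1 * v 3 - u 3 * v 1) - (u 2 * v 4 - u 4 * v 2) := by
  simp [cross7_apply, phiE, tripleDet, Matrix.det_fin_three, EuclideanSpace.single_apply,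
    Matrix.vecHead, Matrix.vecTail]; ring

lemma cross7_6 (u v : E7) : cross7 u v 6 = - (u 0 * v 5 - u 5 * v 0) + (u 1 * v 4 - u 4 * v 1) - (u 2 * v 3 - u 3 * v 2) := by
  simp [cross7_apply, phiE, tripleDet, Matrix.det_fin_three, EuclideanSpace.single_apply,
    Matrix.vecHead, Matrix.vecTail]; ring


lemma inner_self_cross (u v : E7) : ⟪u, cross7 u v⟫ = 0 := by
  simp only [inner_E7, Fin.sum_univ_seven, cross7_0, cross7_1, cross7_2, cross7_3,
    cross7_4, cross7_5, cross7_6]; ring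

lemma inner_right_cross (u v : E7) : ⟪v, cross7 u v⟫ = 0 := by
  simp only [inner_E7, Fin.sum_univ_seven, cross7_0, cross7_1, cross7_2, cross7_3,
    cross7_4, cross7_5, cross7_6]; ring

lemma inner_cross_swap (u v w : E7) : ⟪cross7 u v, w⟫ = - ⟪cross7 u w, v⟫ := by
  simp only [inner_E7, Fin.sum_univ_seven, cross7_0, cross7_1, cross7_2, cross7_3,
    cross7_4, cross7_5, cross7_6]; ring

lemma cross_skew (u v : E7) : cross7 u v = - cross7 v u := by
  apply e7_ext <;>
    simp only [PiLp.neg_apply, cross7_0, cross7_1, cross7_2, cross7_3, cross7_4, cross7_5,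
      cross7_6] <;> ring

lemma cross_cross_self (u v : E7) :
    cross7 u (cross7 u v) = ⟪u,v⟫ • u - ⟪u,u⟫ • v := by
  apply e7_ext <;>
    simp only [inner_E7, Fin.sum_univ_seven, PiLp.sub_apply, PiLp.smul_apply, smul_eq_mul,
      cross7_0, cross7_1, cross7_2, cross7_3, cross7_4, cross7_5, cross7_6] <;> ring

lemma cross_assoc_identity (u v w : E7) :
    cross7 u (cross7 v w) = (2 * ⟪u,w⟫) • v - ⟪v,w⟫ • u - ⟪u,v⟫ • w -
      cross7 (cross7 u v) w := by
  apply e7_ext <;>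
    simp only [inner_E7, Fin.sum_univ_seven, PiLp.sub_apply, PiLp.smul_apply, smul_eq_mul,
      cross7_0, cross7_1, cross7_2, cross7_3, cross7_4, cross7_5, cross7_6] <;> ring

lemma cross_add_left (u u' v : E7) : cross7 (u + u') v = cross7 u v + cross7 u' v := by
  apply e7_ext <;>
    simp only [PiLp.add_apply, cross7_0, cross7_1, cross7_2, cross7_3, cross7_4, cross7_5,
      cross7_6] <;> ring

lemma cross_add_right (u v v' : E7) : cross7 u (v + v') = cross7 u v + cross7 u v' := by
  apply e7_ext <;>
    simp only [PiLp.add_apply, cross7_0, cross7_1, cross7_2, cross7_3, cross7_4, cross7_5,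
      cross7_6] <;> ring

lemma cross_smul_left (s : ℝ) (u v : E7) : cross7 (s • u) v = s • cross7 u v := by
  apply e7_ext <;>
    simp only [PiLp.smul_apply, smul_eq_mul, cross7_0, cross7_1, cross7_2, cross7_3, cross7_4,
      cross7_5, cross7_6] <;> ring

lemma cross_smul_right (s : ℝ) (u v : E7) : cross7 u (s • v) = s • cross7 u v := by
  apply e7_ext <;>
    simp only [PiLp.smul_apply, smul_eq_mul, cross7_0, cross7_1, cross7_2, cross7_3, cross7_4,
      cross7_5, cross7_6] <;> ring

lemma cross_neg_left (u v : E7) : cross7 (-u) v = - cross7 u v := by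
  have := cross_smul_left (-1) u v; simpa using this

lemma cross_neg_right (u v : E7) : cross7 u (-v) = - cross7 u v := by
  have := cross_smul_right (-1) u v; simpa using this

lemma cross_sub_right (u v v' : E7) : cross7 u (v - v') = cross7 u v - cross7 u v' := by
  rw [sub_eq_add_neg, cross_add_right, cross_neg_right, ← sub_eq_add_neg]

lemma cross7_self (u : E7) : cross7 u u = 0 := by
  apply e7_ext <;>
    simp only [cross7_0, cross7_1, cross7_2, cross7_3, cross7_4, cross7_5, cross7_6,
      PiLp.zero_apply] <;> ring

/- ### A coframe adapted to the curve -/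

/-- The algebraic facts satisfied by the frame n = F p, a = f₁, b = f₂. -/
def Frame (n a b : E7) : Prop :=
  b = cross7 n a ∧ cross7 n b = -a ∧ ⟪n,n⟫ = 1 ∧ ⟪a,a⟫ = 1 ∧ ⟪n,a⟫ = 0

namespace Frame

variable {n a b : E7}

lemma inb (h : Frame n a b) : ⟪n,b⟫ = 0 := by
  obtain ⟨hb, -, -, -, -⟩ := h; rw [hb]; exact inner_self_cross n a

lemma iab (h : Frame n a b) : ⟪a,b⟫ = 0 := by
  obtain ⟨hb, -, -, -, -⟩ := h; rw [hb]; exact inner_right_cross n a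

lemma ibb (h : Frame n a b) : ⟪b,b⟫ = 1 := by
  obtain ⟨hb, hnb, -, iaa, -⟩ := h
  calc ⟪b,b⟫ = ⟪cross7 n a, b⟫ := by rw [← hb]
    _ = -⟪cross7 n b, a⟫ := inner_cross_swap n a b
    _ = -⟪-a, a⟫ := by rw [hnb]
    _ = ⟪a,a⟫ := by rw [inner_neg_left]; ring
    _ = 1 := iaa

lemma hab (h : Frame n a b) : cross7 a b = n := by
  obtain ⟨hb, -, -, iaa, ina⟩ := h
  have h1 : cross7 n a = -cross7 a n := cross_skew n a
  rw [hb, h1, cross_neg_right, cross_cross_self]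
  rw [real_inner_comm n a, ina, iaa]
  simp

lemma hba (h : Frame n a b) : cross7 b a = -n := by
  rw [cross_skew b a, h.hab]

/- Inner products of frame vectors against cross products. -/

lemma i_a_nw (h : Frame n a b) (w : E7) : ⟪a, cross7 n w⟫ = -⟪b,w⟫ := by
  obtain ⟨hb, -, -, -, -⟩ := h
  rw [real_inner_comm, inner_cross_swap, ← hb, real_inner_comm]

lemma i_b_nw (h : Frame n a b) (w : E7) : ⟪b, cross7 n w⟫ = ⟪a,w⟫ := by
  obtain ⟨-, hnb, -, -, -⟩ := h
  rw [real_inner_comm, inner_cross_swap, hnb, inner_neg_left, real_inner_comm]; ring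

lemma i_n_aw (h : Frame n a b) (w : E7) : ⟪n, cross7 a w⟫ = ⟪b,w⟫ := by
  obtain ⟨hb, -, -, -, -⟩ := h
  rw [real_inner_comm, inner_cross_swap, cross_skew a n, inner_neg_left, ← hb,
    real_inner_comm]
  ring

lemma i_b_aw (h : Frame n a b) (w : E7) : ⟪b, cross7 a w⟫ = -⟪n,w⟫ := by
  rw [real_inner_comm, inner_cross_swap, h.hab, real_inner_comm]

lemma i_n_bw (h : Frame n a b) (w : E7) : ⟪n, cross7 b w⟫ = -⟪a,w⟫ := by
  obtain ⟨-, hnb, -, -, -⟩ := h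
  rw [real_inner_comm, inner_cross_swap, cross_skew b n, inner_neg_left, hnb,
    inner_neg_left, real_inner_comm]
  ring

lemma i_a_bw (h : Frame n a b) (w : E7) : ⟪a, cross7 b w⟫ = ⟪n,w⟫ := by
  rw [real_inner_comm, inner_cross_swap, h.hba, inner_neg_left, real_inner_comm]; ring

/- Key cross-product identities on normal vectors. -/

lemma E1 (h : Frame n a b) {w : E7} (h1 : ⟪n,w⟫ = 0) (h2 : ⟪a,w⟫ = 0) :
    cross7 a (cross7 n w) = cross7 b w := by
  obtain ⟨hb, -, -, -, ina⟩ := h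
  rw [cross_assoc_identity, cross_skew a n, ← hb, cross_neg_left, h1, h2,
    real_inner_comm n a, ina]
  simp

lemma E2 (h : Frame n a b) {w : E7} (h1 : ⟪n,w⟫ = 0) (h3 : ⟪b,w⟫ = 0) :
    cross7 b (cross7 n w) = -cross7 a w := by
  have hnb := h.2.1
  have inb := h.inb
  rw [cross_assoc_identity, cross_skew b n, hnb, neg_neg, h1, h3,
    real_inner_comm n b, inb]
  simp

lemma E3 (h : Frame n a b) {w : E7} (h2 : ⟪a,w⟫ = 0) (h3 : ⟪b,w⟫ = 0) :
    cross7 a (cross7 b w) = -cross7 n w := by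
  rw [cross_assoc_identity, h.hab, h2, h3, h.iab]
  simp

lemma E4 (h : Frame n a b) {w : E7} (h2 : ⟪a,w⟫ = 0) (h3 : ⟪b,w⟫ = 0) :
    cross7 b (cross7 a w) = cross7 n w := by
  rw [cross_assoc_identity, h.hba, cross_neg_left, h2, h3, real_inner_comm a b, h.iab]
  simp

lemma E5 (h : Frame n a b) {w : E7} (h1 : ⟪n,w⟫ = 0) :
    cross7 n (cross7 n w) = -w := by
  rw [cross_cross_self, h1, h.2.2.1]
  simp

end Frame

/- ### The orthogonal projection in frame coordinates -/

/-- Explicit orthogonal projection onto the orthogonal complement of span {n, a, b}. -/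
def Pfun (n a b w : E7) : E7 := w - ⟪n,w⟫ • n - ⟪a,w⟫ • a - ⟪b,w⟫ • b

namespace Pfun

variable {n a b : E7}

lemma add (w w' : E7) : Pfun n a b (w + w') = Pfun n a b w + Pfun n a b w' := by
  simp only [Pfun, inner_add_right, add_smul]; module

lemma smul (s : ℝ) (w : E7) : Pfun n a b (s • w) = s • Pfun n a b w := by
  simp only [Pfun, inner_smul_right, smul_smul]
  module

lemma neg (w : E7) : Pfun n a b (-w) = -Pfun n a b w := by
  have := smul (n := n) (a := a) (b := b) (-1) w; simpa using this

lemma sub (w w' : E7) : Pfun n a b (w - w') = Pfun n a b w - Pfun n a b w' := by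
  rw [sub_eq_add_neg, add, neg, ← sub_eq_add_neg]

lemma inner_n (h : Frame n a b) (w : E7) : ⟪n, Pfun n a b w⟫ = 0 := by
  have inb := h.inb
  obtain ⟨-, -, inn, -, ina⟩ := h
  simp only [Pfun, inner_sub_right, inner_smul_right, inn, ina, inb]
  ring

lemma inner_a (h : Frame n a b) (w : E7) : ⟪a, Pfun n a b w⟫ = 0 := by
  have iab := h.iab
  obtain ⟨-, -, -, iaa, ina⟩ := h
  simp only [Pfun, inner_sub_right, inner_smul_right, iaa, iab, real_inner_comm n a, ina]
  ring

lemma inner_b (h : Frame n a b) (w : E7) : ⟪b, Pfun n a b w⟫ = 0 := by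
  have h1 := h.ibb
  have h2 := h.inb
  have h3 := h.iab
  simp only [Pfun, inner_sub_right, inner_smul_right, h1, real_inner_comm n b, h2,
    real_inner_comm a b, h3]
  ring

lemma of_mem {w : E7} (h1 : ⟪n,w⟫ = 0) (h2 : ⟪a,w⟫ = 0) (h3 : ⟪b,w⟫ = 0) :
    Pfun n a b w = w := by
  simp [Pfun, h1, h2, h3]

lemma self_n (h : Frame n a b) : Pfun n a b n = 0 := by
  have inb := h.inb
  obtain ⟨-, -, inn, -, ina⟩ := h
  simp only [Pfun, inn, real_inner_comm n a, ina, real_inner_comm n b, inb]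
  module

lemma cross_n (h : Frame n a b) (w : E7) :
    Pfun n a b (cross7 n w) = cross7 n (Pfun n a b w) := by
  have hianw := h.i_a_nw w
  have hibnw := h.i_b_nw w
  obtain ⟨hb, hnb, -, -, -⟩ := h
  rw [Pfun, Pfun, cross_sub_right, cross_sub_right, cross_sub_right,
    inner_self_cross, hianw, hibnw, cross_smul_right, cross_smul_right,
    cross_smul_right, cross7_self, ← hb, hnb]
  module

end Pfun

/- ### The cross product as a continuous bilinear map -/

def crossLM : E7 →ₗ[ℝ] E7 →ₗ[ℝ] E7 :=
  LinearMap.mk₂ ℝ cross7 cross_add_left cross_smul_left cross_add_right cross_smul_right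

def crossCLM : E7 →L[ℝ] E7 →L[ℝ] E7 :=
  LinearMap.toContinuousLinearMap
    { toFun := fun u => LinearMap.toContinuousLinearMap (crossLM u)
      map_add' := by intro u u'; ext v; simp [crossLM, cross_add_left]
      map_smul' := by intro s u; ext v; simp [crossLM, cross_smul_left] }

lemma crossCLM_apply (u v : E7) : crossCLM u v = cross7 u v := rfl

lemma fderiv_cross_apply (f g : Pt → E7) (p : Pt) (hf : DifferentiableAt ℝ f p)
    (hg : DifferentiableAt ℝ g p) (c : Pt) :
    fderiv ℝ (fun q => cross7 (f q) (g q)) p c =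
      cross7 (fderiv ℝ f p c) (g p) + cross7 (f p) (fderiv ℝ g p c) := by
  have h := (crossCLM.isBoundedBilinearMap.hasFDerivAt (f p, g p)).comp p
    (HasFDerivAt.prodMk (hf.hasFDerivAt) (hg.hasFDerivAt))
  have h2 : HasFDerivAt (fun q => cross7 (f q) (g q)) _ p := h
  rw [h2.fderiv]
  exact add_comm (cross7 (f p) (fderiv ℝ g p c)) (cross7 (fderiv ℝ f p c) (g p))

lemma diff_cross (f g : Pt → E7) (p : Pt) (hf : DifferentiableAt ℝ f p)
    (hg : DifferentiableAt ℝ g p) :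
    DifferentiableAt ℝ (fun q => cross7 (f q) (g q)) p := by
  have h := (crossCLM.isBoundedBilinearMap.hasFDerivAt (f p, g p)).comp p
    (HasFDerivAt.prodMk (hf.hasFDerivAt) (hg.hasFDerivAt))
  exact (h : HasFDerivAt (fun q => cross7 (f q) (g q)) _ p).differentiableAt

/- ### The orthogonal projection equals its frame-coordinate formula -/

lemma span_n_mem (F : Pt → E7) (p : Pt) : F p ∈ TanSpan F p :=
  Submodule.subset_span (Set.mem_insert _ _)

lemma span_a_mem (F : Pt → E7) (p : Pt) : fderiv ℝ F p (1, 0) ∈ TanSpan F p :=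
  Submodule.subset_span (Set.mem_insert_of_mem _ (Set.mem_insert _ _))

lemma span_b_mem (F : Pt → E7) (p : Pt) : fderiv ℝ F p (0, 1) ∈ TanSpan F p :=
  Submodule.subset_span (Set.mem_insert_of_mem _ (Set.mem_insert_of_mem _ rfl))

lemma PN_eq_Pfun (F : Pt → E7) (p : Pt)
    (h : Frame (F p) (fderiv ℝ F p (1, 0)) (fderiv ℝ F p (0, 1))) (w : E7) :
    PN F p w = Pfun (F p) (fderiv ℝ F p (1, 0)) (fderiv ℝ F p (0, 1)) w := by
  set n := F p
  set a := fderiv ℝ F p (1, 0)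
  set b := fderiv ℝ F p (0, 1)
  apply Submodule.eq_starProjection_of_mem_orthogonal
  · -- Pfun n a b w ∈ Nsp F p
    rw [Nsp, Submodule.mem_orthogonal]
    intro u hu
    induction hu using Submodule.span_induction with
    | mem z hz =>
        rcases hz with rfl | rfl | rfl
        · exact Pfun.inner_n h w
        · exact Pfun.inner_a h w
        · exact Pfun.inner_b h w
    | zero => exact inner_zero_left _
    | add y z _ _ hy hz => rw [inner_add_left, hy, hz]; ring
    | smul s y _ hy => rw [inner_smul_left, hy]; simp
  · -- w - Pfun n a b w ∈ (Nsp F p)ᗮ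
    have hmem : w - Pfun n a b w ∈ TanSpan F p := by
      have hrw : w - Pfun n a b w = ⟪n,w⟫ • n + ⟪a,w⟫ • a + ⟪b,w⟫ • b := by
        rw [Pfun]; module
      rw [hrw]
      exact Submodule.add_mem _
        (Submodule.add_mem _ (Submodule.smul_mem _ _ (span_n_mem F p))
          (Submodule.smul_mem _ _ (span_a_mem F p)))
        (Submodule.smul_mem _ _ (span_b_mem F p))
    exact Submodule.le_orthogonal_orthogonal _ hmem

/-- Let Σ be an embedded J-holomorphic curve in S⁶ with local oriented orthonormal frame
{f₁, f₂ = jf₁} at p.  Then the Dirac operator 𝐃_Σ = Σᵢ fᵢ × ∇̃^⊥_{fᵢ} satisfies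
𝐃_Σ = Σᵢ fᵢ × ∇^⊥_{fᵢ} − J, the J-antilinear bundle map γ_Σ yields
γ_Σ ∘ ∂̄^N_∇ = 𝐃_Σ + 2J (where γ_Σ(α) = Σᵢ fᵢ × α(fᵢ)), and γ_Σ((∇^⊥J)J) = −2J. -/
theorem statement6 (F ξ : Pt → E7)
    (hF : ContDiff ℝ (⊤ : ℕ∞) F) (hξ : ContDiff ℝ (⊤ : ℕ∞) ξ)
    (hunit : ∀ p, ‖F p‖ = 1)
    (hholo : ∀ p c, fderiv ℝ F p (j0 c) = cross7 (F p) (fderiv ℝ F p c))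
    (hnorm : ∀ p, ξ p ∈ Nsp F p)
    (p : Pt) (hframe : ‖fderiv ℝ F p (1, 0)‖ = 1) :
    DSig F ξ p =
        cross7 (fderiv ℝ F p (1, 0)) (covN F ξ p (1, 0)) +
          cross7 (fderiv ℝ F p (0, 1)) (covN F ξ p (0, 1)) - cross7 (F p) (ξ p) ∧
      cross7 (fderiv ℝ F p (1, 0)) (dbarN F ξ p (1, 0)) +
          cross7 (fderiv ℝ F p (0, 1)) (dbarN F ξ p (0, 1))
        = DSig F ξ p + (2 : ℝ) • cross7 (F p) (ξ p) ∧
      cross7 (fderiv ℝ F p (1, 0)) (nablaPerpJJ F ξ p (1, 0)) +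
          cross7 (fderiv ℝ F p (0, 1)) (nablaPerpJJ F ξ p (0, 1))
        = -((2 : ℝ) • cross7 (F p) (ξ p)) := by
  have hFd : ∀ q, DifferentiableAt ℝ F q := fun q => (hF.differentiable (by simp)).differentiableAt
  have hξd : ∀ q, DifferentiableAt ℝ ξ q := fun q => (hξ.differentiable (by simp)).differentiableAt
  have hj1 : j0 (1, 0) = ((0 : ℝ), (1 : ℝ)) := by norm_num [j0]
  have hj2 : j0 (0, 1) = ((-1 : ℝ), (0 : ℝ)) := by norm_num [j0]
  have hprodneg : ((-1 : ℝ), (0 : ℝ)) = -((1 : ℝ), (0 : ℝ)) := by norm_num [Prod.ext_iff]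
  set n := F p with hn
  set a := fderiv ℝ F p (1, 0) with ha
  set b := fderiv ℝ F p (0, 1) with hb0
  set x := ξ p with hx
  set u := fderiv ℝ ξ p (1, 0) with hu0
  set v := fderiv ℝ ξ p (0, 1) with hv0
  -- frame relations
  have hbeq : b = cross7 n a := by
    have h1 := hholo p (1, 0)
    rw [hj1] at h1
    rw [hb0, ha, hn]
    exact h1
  have hma : fderiv ℝ F p ((-1 : ℝ), (0 : ℝ)) = -a := by
    rw [hprodneg, map_neg, ← ha]
  have hmu : fderiv ℝ ξ p ((-1 : ℝ), (0 : ℝ)) = -u := by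
    rw [hprodneg, map_neg, ← hu0]
  have hanb : cross7 n b = -a := by
    have h1 := hholo p (0, 1)
    rw [hj2, hma] at h1
    rw [hn, hb0]
    exact h1.symm
  have inn : ⟪n,n⟫ = 1 := by
    rw [real_inner_self_eq_norm_mul_norm, hn, hunit p]; norm_num
  have iaa : ⟪a,a⟫ = 1 := by
    rw [real_inner_self_eq_norm_mul_norm, hframe]; norm_num
  have ina : ⟪n,a⟫ = 0 := by
    have h1 : a = -cross7 n b := by rw [hanb, neg_neg]
    rw [h1, inner_neg_right, inner_self_cross]; ring
  have hFr : Frame n a b := ⟨hbeq, hanb, inn, iaa, ina⟩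
  -- the orthogonal projection in frame coordinates
  have hP : ∀ w, PN F p w = Pfun n a b w := by
    have hFr' := hFr
    rw [hn, ha, hb0] at hFr'
    intro w
    have h1 := PN_eq_Pfun F p hFr' w
    rw [← hn, ← ha, ← hb0] at h1
    exact h1
  -- orthogonality of ξ
  have horth : ∀ q, ∀ w ∈ TanSpan F q, ⟪w, ξ q⟫ = 0 := fun q =>
    fun w hw => ((TanSpan F q).mem_orthogonal (ξ q)).1 (hnorm q) w hw
  have ixn : ⟪n, x⟫ = 0 := horth p _ (span_n_mem F p)
  have ixa : ⟪a, x⟫ = 0 := horth p _ (span_a_mem F p)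
  have ixb : ⟪b, x⟫ = 0 := horth p _ (span_b_mem F p)
  -- inner products of cross terms
  have ibxn : ⟪n, cross7 b x⟫ = 0 := by rw [hFr.i_n_bw, ixa]; ring
  have ibxa : ⟪a, cross7 b x⟫ = 0 := by rw [hFr.i_a_bw, ixn]
  have ibxb : ⟪b, cross7 b x⟫ = 0 := inner_self_cross b x
  have iaxn : ⟪n, cross7 a x⟫ = 0 := by rw [hFr.i_n_aw, ixb]
  have iaxa : ⟪a, cross7 a x⟫ = 0 := inner_self_cross a x
  have iaxb : ⟪b, cross7 a x⟫ = 0 := by rw [hFr.i_b_aw, ixn]; ring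
  set U := Pfun n a b u with hU0
  set V := Pfun n a b v with hV0
  have iUn : ⟪n, U⟫ = 0 := Pfun.inner_n hFr u
  have iUb : ⟪b, U⟫ = 0 := Pfun.inner_b hFr u
  have iVn : ⟪n, V⟫ = 0 := Pfun.inner_n hFr v
  have iVa : ⟪a, V⟫ = 0 := Pfun.inner_a hFr v
  -- covariant derivatives
  have hcovN1 : covN F ξ p (1, 0) = U := by
    simp only [covN]; rw [hP, ← hu0]
  have hcovN2 : covN F ξ p (0, 1) = V := by
    simp only [covN]; rw [hP, ← hv0]
  have hcovNm : covN F ξ p ((-1 : ℝ), (0 : ℝ)) = -U := by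
    simp only [covN]; rw [hmu, hP, Pfun.neg]
  have hcovT1 : covT F ξ p (1, 0) = U + (2 : ℝ)⁻¹ • cross7 b x := by
    simp only [covT]
    rw [hP, Pfun.add, Pfun.smul, ← hu0, ← ha, ← hn, ← hx, hFr.E1 ixn ixa,
      Pfun.of_mem ibxn ibxa ibxb]
  have hcovT2 : covT F ξ p (0, 1) = V - (2 : ℝ)⁻¹ • cross7 a x := by
    simp only [covT]
    rw [hP, Pfun.add, Pfun.smul, ← hv0, ← hb0, ← hn, ← hx, hFr.E2 ixn ixb, Pfun.neg,
      Pfun.of_mem iaxn iaxa iaxb]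
    module
  -- Part 1
  have step1 : DSig F ξ p = cross7 a U + cross7 b V - cross7 n x := by
    simp only [DSig]
    rw [← ha, ← hb0, hcovT1, hcovT2, cross_add_right, cross_smul_right,
      hFr.E3 ixa ixb, cross_sub_right, cross_smul_right, hFr.E4 ixa ixb]
    module
  refine ⟨by rw [step1, hcovN1, hcovN2], ?_, ?_⟩
  · -- Part 2
    have hdbar1 : dbarN F ξ p (1, 0) =
        (2 : ℝ)⁻¹ • (U + cross7 n V - cross7 b x) := by
      simp only [dbarN, tproj]
      rw [hj1, hcovN2, ← hn, ← hx, ← hb0, hcovN1]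
      rw [hP, Pfun.sub, Pfun.smul, Pfun.self_n hFr, cross_skew x b, Pfun.neg,
        Pfun.of_mem ibxn ibxa ibxb]
      module
    have hdbar2 : dbarN F ξ p (0, 1) =
        (2 : ℝ)⁻¹ • (V - cross7 n U + cross7 a x) := by
      simp only [dbarN, tproj]
      rw [hj2, hcovNm, hma, ← hn, ← hx, hcovN2]
      have hxa : cross7 x (-a) = cross7 a x := by
        rw [cross_neg_right, cross_skew x a, neg_neg]
      rw [hxa, hP, Pfun.sub, Pfun.smul, Pfun.self_n hFr, Pfun.of_mem iaxn iaxa iaxb,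
        cross_neg_right]
      module
    rw [hdbar1, hdbar2, step1, cross_smul_right, cross_smul_right, cross_sub_right,
      cross_add_right, cross_add_right, cross_sub_right, hFr.E1 iVn iVa, hFr.E2 iUn iUb,
      hFr.E3 ixa ixb, hFr.E4 ixa ixb]
    module
  · -- Part 3
    have hfd1 : ∀ c : Pt, fderiv ℝ (fun q => cross7 (F q) (ξ q)) p c =
        cross7 (fderiv ℝ F p c) x + cross7 n (fderiv ℝ ξ p c) :=
      fun c => fderiv_cross_apply F ξ p (hFd p) (hξd p) c
    have hfd2 : ∀ c : Pt, fderiv ℝ (fun q => cross7 (F q) (cross7 (F q) (ξ q))) p c =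
        cross7 (fderiv ℝ F p c) (cross7 n x) +
          cross7 n (cross7 (fderiv ℝ F p c) x + cross7 n (fderiv ℝ ξ p c)) := by
      intro c
      have h1 := fderiv_cross_apply F (fun q => cross7 (F q) (ξ q)) p (hFd p)
        (diff_cross F ξ p (hFd p) (hξd p)) c
      rw [hfd1 c] at h1
      exact h1
    have hnab1 : nablaPerpJJ F ξ p (1, 0) = cross7 b x := by
      simp only [nablaPerpJJ, covN]
      rw [hfd2 (1, 0), hfd1 (1, 0), ← ha, ← hu0, hP, hP, Pfun.add, Pfun.add,
        hFr.E1 ixn ixa, Pfun.of_mem ibxn ibxa ibxb, Pfun.cross_n hFr, Pfun.add,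
        Pfun.of_mem iaxn iaxa iaxb, Pfun.cross_n hFr]
      abel
    have hnab2 : nablaPerpJJ F ξ p (0, 1) = -cross7 a x := by
      simp only [nablaPerpJJ, covN]
      rw [hfd2 (0, 1), hfd1 (0, 1), ← hb0, ← hv0, hP, hP, Pfun.add, Pfun.add,
        hFr.E2 ixn ixb, Pfun.neg, Pfun.of_mem iaxn iaxa iaxb, Pfun.cross_n hFr, Pfun.add,
        Pfun.of_mem ibxn ibxa ibxb, Pfun.cross_n hFr]
      abel
    rw [hnab1, hnab2, hFr.E3 ixa ixb, cross_neg_right, hFr.E4 ixa ixb]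
    module
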